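/- Let A ∈ ℝ^{m×n_A} and let B ∈ ℝ^{m×n_B} have unit-norm columns. Let OPT_k be a set of k columns of B maximizing f_A among all k-element subsets, with σ := σ_min(OPT_k) > 0. Let ε, δ > 0 with ε + δ ≤ 1 and δ < 1, and set s := ⌈n_B·log(1/δ)/k⌉. Consider the random process T_0 = ∅ and, for each step i, draw R_i uniformly at random among the size-s subsets of (columns of B) \ T_i (taking all remaining columns if fewer than s remain) and set T_{i+1} := T_i ∪ {v_i}, where v_i maximizes v ↦ f_A(T_i ∪ {v}) over v ∈ R_i (ties broken by a fixed rule). Then for every natural number r ≥ 16k/(ε·σ), E[f_A(T_r)] ≥ (1 − ε − δ)·f_A(OPT_k). -/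

import Mathlib

open scoped RealInnerProductSpace

attribute [local instance] Classical.decEq

noncomputable def fVec {m : ℕ} (u : EuclideanSpace ℝ (Fin m))
    (S : Finset (EuclideanSpace ℝ (Fin m))) : ℝ :=
  ‖(Submodule.orthogonalProjectionOnto (Submodule.span ℝ (S : Set (EuclideanSpace ℝ (Fin m)))) u :
      EuclideanSpace ℝ (Fin m))‖ ^ 2

noncomputable def fMat {m n : ℕ} (A : Fin n → EuclideanSpace ℝ (Fin m))
    (S : Finset (EuclideanSpace ℝ (Fin m))) : ℝ :=
  ∑ j, fVec (A j) S

noncomputable def sigmaMin {m : ℕ} (S : Finset (EuclideanSpace ℝ (Fin m))) : ℝ :=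
  sInf {r : ℝ | ∃ α : S → ℝ, ∑ v, (α v) ^ 2 = 1 ∧
    r = ‖∑ v, α v • (v : EuclideanSpace ℝ (Fin m))‖ ^ 2}

noncomputable def sigmaMax {m : ℕ} (S : Finset (EuclideanSpace ℝ (Fin m))) : ℝ :=
  sSup {r : ℝ | ∃ α : S → ℝ, ∑ v, (α v) ^ 2 = 1 ∧
    r = ‖∑ v, α v • (v : EuclideanSpace ℝ (Fin m))‖ ^ 2}

def IsGreedySeq {m nA nB : ℕ} (A : Fin nA → EuclideanSpace ℝ (Fin m))
    (B : Fin nB → EuclideanSpace ℝ (Fin m))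
    (T : ℕ → Finset (EuclideanSpace ℝ (Fin m))) (b : ℕ → Fin nB) : Prop :=
  T 0 = ∅ ∧ ∀ i, T (i + 1) = insert (B (b i)) (T i) ∧
    ∀ j, fMat A (insert (B j) (T i)) ≤ fMat A (insert (B (b i)) (T i))

/-- Expected value of f_A of the (image of the) index set produced by the
lazier-than-lazy greedy process: starting from T, do r more steps; in each step
draw a uniformly random subset of the remaining column indices of size s (or
all remaining columns if fewer than s remain), and add the element of the
sample chosen by the fixed rule `pick` (intended: a maximizer of the marginal
gain). The expectation is computed recursively by averaging over the samples. -/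
noncomputable def lazyExp {m nA nB : ℕ}
    (A : Fin nA → EuclideanSpace ℝ (Fin m)) (B : Fin nB → EuclideanSpace ℝ (Fin m))
    (pick : Finset (Fin nB) → Finset (Fin nB) → Fin nB) (s : ℕ) :
    ℕ → Finset (Fin nB) → ℝ
  | 0, T => fMat A (T.image B)
  | r + 1, T =>
      (∑ R ∈ (Finset.univ \ T).powersetCard (min s (Finset.univ \ T).card),
          lazyExp A B pick s r (if R.Nonempty then insert (pick T R) T else T)) /
        (((Finset.univ \ T).powersetCard (min s (Finset.univ \ T).card)).card : ℝ)

section ProjBasics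
variable {m : ℕ}
local notation "E" => EuclideanSpace ℝ (Fin m)

lemma proj_pythagoras (K : Submodule ℝ (EuclideanSpace ℝ (Fin m))) [K.HasOrthogonalProjection]
    (u : EuclideanSpace ℝ (Fin m)) :
    ‖u‖ ^ 2 = ‖(Submodule.orthogonalProjectionOnto K u : E)‖ ^ 2 + ‖u - Submodule.orthogonalProjectionOnto K u‖ ^ 2 := by
  have h := Submodule.sub_starProjection_mem_orthogonal (K := K) u
  have horth : ⟪(Submodule.orthogonalProjectionOnto K u : E), u - Submodule.orthogonalProjectionOnto K u⟫ = 0 :=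
    (Submodule.mem_orthogonal K _).1 h _ (Submodule.orthogonalProjectionOnto K u).2
  have huu : u = (Submodule.orthogonalProjectionOnto K u : E) + (u - Submodule.orthogonalProjectionOnto K u) := by abel
  calc ‖u‖ ^ 2 = ‖(Submodule.orthogonalProjectionOnto K u : E) + (u - Submodule.orthogonalProjectionOnto K u)‖ ^ 2 := by
        rw [← huu]
    _ = ‖(Submodule.orthogonalProjectionOnto K u : E)‖ ^ 2 + 2 * ⟪(Submodule.orthogonalProjectionOnto K u : E),
          u - Submodule.orthogonalProjectionOnto K u⟫ + ‖u - Submodule.orthogonalProjectionOnto K u‖ ^ 2 := norm_add_sq_real _ _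
    _ = _ := by rw [horth]; ring

lemma proj_min (K : Submodule ℝ (EuclideanSpace ℝ (Fin m))) [K.HasOrthogonalProjection]
    (u y : EuclideanSpace ℝ (Fin m)) (hy : y ∈ K) :
    ‖u - Submodule.orthogonalProjectionOnto K u‖ ^ 2 ≤ ‖u - y‖ ^ 2 := by
  have h := Submodule.sub_starProjection_mem_orthogonal (K := K) u
  have horth : ⟪u - Submodule.orthogonalProjectionOnto K u, (Submodule.orthogonalProjectionOnto K u : E) - y⟫ = 0 :=
    (Submodule.mem_orthogonal' K _).1 h _ (Submodule.sub_mem K (Submodule.orthogonalProjectionOnto K u).2 hy)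
  have hdecomp : u - y = (u - Submodule.orthogonalProjectionOnto K u) + ((Submodule.orthogonalProjectionOnto K u : E) - y) := by
    abel
  have h2 : ‖u - y‖ ^ 2 = ‖u - Submodule.orthogonalProjectionOnto K u‖ ^ 2 +
      2 * ⟪u - Submodule.orthogonalProjectionOnto K u, (Submodule.orthogonalProjectionOnto K u : E) - y⟫ +
      ‖(Submodule.orthogonalProjectionOnto K u : E) - y‖ ^ 2 := by
    rw [hdecomp]; exact norm_add_sq_real _ _
  rw [h2, horth]
  nlinarith [sq_nonneg ‖(Submodule.orthogonalProjectionOnto K u : E) - y‖]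

lemma proj_norm_le (K : Submodule ℝ (EuclideanSpace ℝ (Fin m))) [K.HasOrthogonalProjection]
    (u : EuclideanSpace ℝ (Fin m)) :
    ‖(Submodule.orthogonalProjectionOnto K u : E)‖ ^ 2 ≤ ‖u‖ ^ 2 := by
  have := proj_pythagoras K u
  nlinarith [sq_nonneg ‖u - Submodule.orthogonalProjectionOnto K u‖]

lemma fVec_nonneg (u : EuclideanSpace ℝ (Fin m)) (S : Finset (EuclideanSpace ℝ (Fin m))) :
    0 ≤ fVec u S := sq_nonneg _

lemma fVec_le (u : EuclideanSpace ℝ (Fin m)) (S : Finset (EuclideanSpace ℝ (Fin m))) :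
    fVec u S ≤ ‖u‖ ^ 2 := proj_norm_le _ _

lemma fVec_mono (u : EuclideanSpace ℝ (Fin m)) {S S' : Finset (EuclideanSpace ℝ (Fin m))}
    (h : S ⊆ S') : fVec u S ≤ fVec u S' := by
  set K := Submodule.span ℝ (S : Set E)
  set K' := Submodule.span ℝ (S' : Set E)
  have hKK' : K ≤ K' := Submodule.span_mono (by exact_mod_cast h)
  have h1 := proj_pythagoras K u
  have h2 := proj_pythagoras K' u
  have h3 : ‖u - Submodule.orthogonalProjectionOnto K' u‖ ^ 2 ≤ ‖u - Submodule.orthogonalProjectionOnto K u‖ ^ 2 :=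
    proj_min K' u _ (hKK' (Submodule.orthogonalProjectionOnto K u).2)
  unfold fVec
  nlinarith

lemma fMat_nonneg {n : ℕ} (A : Fin n → EuclideanSpace ℝ (Fin m))
    (S : Finset (EuclideanSpace ℝ (Fin m))) : 0 ≤ fMat A S :=
  Finset.sum_nonneg fun j _ => fVec_nonneg _ _

lemma fMat_mono {n : ℕ} (A : Fin n → EuclideanSpace ℝ (Fin m))
    {S S' : Finset (EuclideanSpace ℝ (Fin m))} (h : S ⊆ S') : fMat A S ≤ fMat A S' :=
  Finset.sum_le_sum fun j _ => fVec_mono _ h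

end ProjBasics
section Gain
variable {m : ℕ}
local notation "E" => EuclideanSpace ℝ (Fin m)

lemma inner_proj_orth {K : Submodule ℝ (EuclideanSpace ℝ (Fin m))} [K.HasOrthogonalProjection]
    (u : EuclideanSpace ℝ (Fin m)) {x : E} (hx : x ∈ K) :
    ⟪u - Submodule.orthogonalProjectionOnto K u, x⟫ = 0 :=
  (Submodule.mem_orthogonal' K _).1 (Submodule.sub_starProjection_mem_orthogonal (K := K) u) x hx

lemma fVec_insert_ge (u v : EuclideanSpace ℝ (Fin m)) (T : Finset (EuclideanSpace ℝ (Fin m)))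
    (hv : ‖v‖ ≤ 1) :
    fVec u T + ⟪u - Submodule.orthogonalProjectionOnto (Submodule.span ℝ (T : Set E)) u, v⟫ ^ 2 ≤
      fVec u (insert v T) := by
  classical
  set K := Submodule.span ℝ (T : Set E) with hK
  set K' := Submodule.span ℝ ((insert v T : Finset E) : Set E) with hK'
  have hKK' : K ≤ K' := Submodule.span_mono (by rw [Finset.coe_insert]; exact Set.subset_insert _ _)
  set u' : E := u - Submodule.orthogonalProjectionOnto K u with hu'
  set c : ℝ := ⟪u', v⟫ with hc
  by_cases hc0 : c = 0
  · have := fVec_mono u (Finset.subset_insert v T)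
    have h0 : c ^ 2 = 0 := by rw [hc0]; norm_num
    linarith
  · set v' : E := v - Submodule.orthogonalProjectionOnto K v with hv'
    have hcv' : ⟪u', v'⟫ = c := by
      have h1 : ⟪u', (Submodule.orthogonalProjectionOnto K v : E)⟫ = 0 :=
        inner_proj_orth u (Submodule.orthogonalProjectionOnto K v).2
      rw [hv', inner_sub_right, h1, hc]; ring
    have hv'ne : v' ≠ 0 := by
      intro h0
      rw [h0] at hcv'
      simp at hcv'
      exact hc0 hcv'.symm
    have hv'pos : 0 < ‖v'‖ ^ 2 := pow_pos (norm_pos_iff.2 hv'ne) 2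
    have hv'le : ‖v'‖ ^ 2 ≤ 1 := by
      have hp := proj_pythagoras K v
      have : ‖v‖ ^ 2 ≤ 1 := by nlinarith [norm_nonneg v]
      nlinarith [sq_nonneg ‖(Submodule.orthogonalProjectionOnto K v : E)‖]
    set y : E := (Submodule.orthogonalProjectionOnto K u : E) + (c / ‖v'‖ ^ 2) • v' with hy
    have hyK' : y ∈ K' := by
      apply K'.add_mem (hKK' (Submodule.orthogonalProjectionOnto K u).2)
      apply K'.smul_mem
      apply K'.sub_mem
      · exact Submodule.subset_span (by simp)
      · exact hKK' (Submodule.orthogonalProjectionOnto K v).2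
    have huy : ‖u - y‖ ^ 2 = ‖u'‖ ^ 2 - c ^ 2 / ‖v'‖ ^ 2 := by
      have hdiff : u - y = u' - (c / ‖v'‖ ^ 2) • v' := by rw [hy, hu']; abel
      rw [hdiff, norm_sub_sq_real, real_inner_smul_right, hcv', norm_smul]
      rw [Real.norm_eq_abs]
      rw [mul_pow, sq_abs]
      field_simp
      ring
    have hmin := proj_min K' u y hyK'
    have hp1 := proj_pythagoras K u
    have hp2 := proj_pythagoras K' u
    have hgoal : fVec u (insert v T) = ‖u‖ ^ 2 - ‖u - Submodule.orthogonalProjectionOnto K' u‖ ^ 2 := by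
      show ‖(Submodule.orthogonalProjectionOnto K' u : E)‖ ^ 2 = _
      linarith [proj_pythagoras K' u]
    have hT : fVec u T = ‖u‖ ^ 2 - ‖u'‖ ^ 2 := by
      show ‖(Submodule.orthogonalProjectionOnto K u : E)‖ ^ 2 = _
      linarith [proj_pythagoras K u]
    have hfrac : c ^ 2 ≤ c ^ 2 / ‖v'‖ ^ 2 := by
      rw [le_div_iff₀ hv'pos]
      nlinarith [sq_nonneg c]
    rw [hgoal, hT]
    have : ‖u - Submodule.orthogonalProjectionOnto K' u‖ ^ 2 ≤ ‖u'‖ ^ 2 - c ^ 2 / ‖v'‖ ^ 2 := by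
      rw [← huy]; exact hmin
    linarith

end Gain

section Sigma
variable {m : ℕ}
local notation "E" => EuclideanSpace ℝ (Fin m)

lemma sigmaMin_le (S : Finset (EuclideanSpace ℝ (Fin m))) (β : S → ℝ)
    (hβ : ∑ v, (β v) ^ 2 = 1) : sigmaMin S ≤ ‖∑ v, β v • (v : E)‖ ^ 2 := by
  apply csInf_le
  · exact ⟨0, fun r ⟨α, _, hr⟩ => hr ▸ sq_nonneg _⟩
  · exact ⟨β, hβ, rfl⟩

lemma sigmaMin_nonneg (S : Finset (EuclideanSpace ℝ (Fin m))) (hS : S.Nonempty) :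
    0 ≤ sigmaMin S := by
  apply Real.sInf_nonneg
  rintro r ⟨α, -, hr⟩
  exact hr ▸ sq_nonneg _

lemma sigmaMin_mul_le (S : Finset (EuclideanSpace ℝ (Fin m))) (hS : 0 ≤ sigmaMin S)
    (α : S → ℝ) :
    sigmaMin S * (∑ v, (α v) ^ 2) ≤ ‖∑ v, α v • (v : E)‖ ^ 2 := by
  set t2 : ℝ := ∑ v, (α v) ^ 2 with ht2
  have ht2nn : 0 ≤ t2 := Finset.sum_nonneg fun v _ => sq_nonneg _
  rcases eq_or_lt_of_le ht2nn with h0 | hpos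
  · have hz : ∀ v : S, α v = 0 := by
      intro v
      have := (Finset.sum_eq_zero_iff_of_nonneg (fun v _ => sq_nonneg (α v))).1 h0.symm v
        (Finset.mem_univ v)
      exact pow_eq_zero_iff (by norm_num) |>.1 this
    have : (∑ v, α v • (v : E)) = 0 := by
      apply Finset.sum_eq_zero; intro v _; rw [hz v, zero_smul]
    rw [this, ← h0]
    simp
  · set t : ℝ := Real.sqrt t2 with ht
    have htpos : 0 < t := Real.sqrt_pos.2 hpos
    have htsq : t ^ 2 = t2 := Real.sq_sqrt (le_of_lt hpos)
    have hβ : ∑ v, (α v / t) ^ 2 = 1 := by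
      simp only [div_pow]
      rw [← Finset.sum_div, ← ht2, htsq]
      field_simp
    have hsum : (∑ v, (α v / t) • (v : E)) = t⁻¹ • ∑ v, α v • (v : E) := by
      rw [Finset.smul_sum]
      refine Finset.sum_congr rfl fun v _ => ?_
      rw [smul_smul, div_eq_inv_mul]
    have hle := sigmaMin_le S (fun v => α v / t) hβ
    rw [hsum, norm_smul, Real.norm_eq_abs, abs_of_pos (inv_pos.2 htpos), mul_pow] at hle
    have h2 : sigmaMin S * t2 ≤ t2 * ((t⁻¹) ^ 2 * ‖∑ v, α v • (v : E)‖ ^ 2) := by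
      calc sigmaMin S * t2 ≤ ((t⁻¹) ^ 2 * ‖∑ v, α v • (v : E)‖ ^ 2) * t2 :=
            mul_le_mul_of_nonneg_right hle ht2nn
        _ = t2 * ((t⁻¹) ^ 2 * ‖∑ v, α v • (v : E)‖ ^ 2) := by ring
    have ht2t : t2 * (t⁻¹) ^ 2 = 1 := by
      rw [← htsq]; field_simp
    calc sigmaMin S * t2 ≤ t2 * ((t⁻¹) ^ 2 * ‖∑ v, α v • (v : E)‖ ^ 2) := h2
      _ = (t2 * (t⁻¹) ^ 2) * ‖∑ v, α v • (v : E)‖ ^ 2 := by ring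
      _ = ‖∑ v, α v • (v : E)‖ ^ 2 := by rw [ht2t, one_mul]

end Sigma
section LemmaA
variable {m : ℕ}
local notation "E" => EuclideanSpace ℝ (Fin m)

lemma proj_inner_self (K : Submodule ℝ (EuclideanSpace ℝ (Fin m))) [K.HasOrthogonalProjection]
    (u : EuclideanSpace ℝ (Fin m)) :
    ⟪u, (Submodule.orthogonalProjectionOnto K u : E)⟫ = ‖(Submodule.orthogonalProjectionOnto K u : E)‖ ^ 2 := by
  have h0 : ⟪u - Submodule.orthogonalProjectionOnto K u, (Submodule.orthogonalProjectionOnto K u : E)⟫ = 0 :=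
    inner_proj_orth u (Submodule.orthogonalProjectionOnto K u).2
  have : ⟪u, (Submodule.orthogonalProjectionOnto K u : E)⟫
      = ⟪u - Submodule.orthogonalProjectionOnto K u, (Submodule.orthogonalProjectionOnto K u : E)⟫
        + ⟪(Submodule.orthogonalProjectionOnto K u : E), (Submodule.orthogonalProjectionOnto K u : E)⟫ := by
    rw [← inner_add_left]; norm_num
  rw [this, h0, real_inner_self_eq_norm_sq]; ring

lemma proj_norm_le' (K : Submodule ℝ (EuclideanSpace ℝ (Fin m))) [K.HasOrthogonalProjection]
    (u : EuclideanSpace ℝ (Fin m)) : ‖(Submodule.orthogonalProjectionOnto K u : E)‖ ≤ ‖u‖ := by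
  nlinarith [proj_norm_le K u, norm_nonneg (Submodule.orthogonalProjectionOnto K u : E), norm_nonneg u]

lemma sigma_proj_le (OPT : Finset (EuclideanSpace ℝ (Fin m))) (hσ0 : 0 ≤ sigmaMin OPT)
    (x : EuclideanSpace ℝ (Fin m)) :
    sigmaMin OPT *
        ‖(Submodule.orthogonalProjectionOnto (Submodule.span ℝ (OPT : Set E)) x : E)‖ ^ 2 ≤
      ∑ v ∈ OPT, ⟪x, v⟫ ^ 2 := by
  classical
  set K := Submodule.span ℝ (OPT : Set E) with hKdef
  set w : E := (Submodule.orthogonalProjectionOnto K x : E) with hw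
  have hwmem : w ∈ K := (Submodule.orthogonalProjectionOnto K x).2
  obtain ⟨α, -, hα⟩ := Submodule.mem_span_finset.1 hwmem
  have hxw : ⟪x, w⟫ = ‖w‖ ^ 2 := proj_inner_self K x
  have hxw2 : ⟪x, w⟫ = ∑ v ∈ OPT, α v * ⟪x, v⟫ := by
    rw [← hα, inner_sum]
    exact Finset.sum_congr rfl fun v _ => real_inner_smul_right _ _ _
  have hCS : (∑ v ∈ OPT, α v * ⟪x, v⟫) ^ 2 ≤
      (∑ v ∈ OPT, (α v) ^ 2) * (∑ v ∈ OPT, ⟪x, v⟫ ^ 2) :=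
    Finset.sum_mul_sq_le_sq_mul_sq _ _ _
  have hσB : sigmaMin OPT * (∑ v ∈ OPT, (α v) ^ 2) ≤ ‖w‖ ^ 2 := by
    have h := sigmaMin_mul_le OPT hσ0 (fun v => α (v : E))
    rw [Finset.sum_coe_sort OPT (fun v => (α v) ^ 2),
      Finset.sum_coe_sort OPT (fun v => α v • v)] at h
    rwa [hα] at h
  have hA : 0 ≤ ∑ v ∈ OPT, ⟪x, v⟫ ^ 2 := Finset.sum_nonneg fun v _ => sq_nonneg _
  have hB : 0 ≤ ∑ v ∈ OPT, (α v) ^ 2 := Finset.sum_nonneg fun v _ => sq_nonneg _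
  have hW : 0 ≤ ‖w‖ ^ 2 := sq_nonneg _
  rcases eq_or_lt_of_le hW with h0 | hpos
  · rw [← h0, mul_zero]; exact hA
  · have key : (‖w‖ ^ 2) ^ 2 ≤ (∑ v ∈ OPT, (α v) ^ 2) * (∑ v ∈ OPT, ⟪x, v⟫ ^ 2) := by
      rw [← hxw, hxw2]; exact hCS
    nlinarith [mul_le_mul_of_nonneg_right hσB hA]

lemma lemmaA {nA : ℕ} (A : Fin nA → EuclideanSpace ℝ (Fin m))
    (OPT Tb : Finset (EuclideanSpace ℝ (Fin m)))
    (hOPT1 : ∀ v ∈ OPT, ‖v‖ = (1 : ℝ)) (hσ0 : 0 ≤ sigmaMin OPT)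
    (hfpos : 0 < fMat A OPT) :
    sigmaMin OPT * (max (fMat A OPT - fMat A Tb) 0) ^ 2 / (4 * fMat A OPT) ≤
      ∑ v ∈ OPT, (fMat A (insert v Tb) - fMat A Tb) := by
  classical
  set KO := Submodule.span ℝ (OPT : Set E) with hKO
  set KT := Submodule.span ℝ (Tb : Set E) with hKT
  have hRHS0 : 0 ≤ ∑ v ∈ OPT, (fMat A (insert v Tb) - fMat A Tb) :=
    Finset.sum_nonneg fun v _ => by
      have := fMat_mono A (Finset.subset_insert v Tb); linarith
  by_cases hle : fMat A OPT ≤ fMat A Tb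
  · have : max (fMat A OPT - fMat A Tb) 0 = 0 := max_eq_right (by linarith)
    rw [this]
    simpa using hRHS0
  push_neg at hle
  have hΔ : max (fMat A OPT - fMat A Tb) 0 = fMat A OPT - fMat A Tb :=
    max_eq_left (by linarith)
  rw [hΔ]
  set Δ : ℝ := fMat A OPT - fMat A Tb with hΔdef
  have hΔpos : 0 < Δ := by rw [hΔdef]; linarith
  -- residuals
  set u' : Fin nA → E := fun j => A j - Submodule.orthogonalProjectionOnto KT (A j) with hu'
  -- step 1 : per v sum over columns
  have step1 : ∀ v ∈ OPT, ∑ j, ⟪u' j, v⟫ ^ 2 ≤ fMat A (insert v Tb) - fMat A Tb := by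
    intro v hv
    have : ∀ j : Fin nA, fVec (A j) Tb + ⟪u' j, v⟫ ^ 2 ≤ fVec (A j) (insert v Tb) :=
      fun j => fVec_insert_ge (A j) v Tb (le_of_eq (hOPT1 v hv))
    have hsum := Finset.sum_le_sum (fun j (_ : j ∈ Finset.univ) => this j)
    rw [Finset.sum_add_distrib] at hsum
    have e1 : (∑ j, fVec (A j) Tb) = fMat A Tb := rfl
    have e2 : (∑ j, fVec (A j) (insert v Tb)) = fMat A (insert v Tb) := rfl
    rw [e1, e2] at hsum
    linarith
  have step1' : ∑ j, ∑ v ∈ OPT, ⟪u' j, v⟫ ^ 2 ≤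
      ∑ v ∈ OPT, (fMat A (insert v Tb) - fMat A Tb) := by
    rw [Finset.sum_comm]
    exact Finset.sum_le_sum step1
  -- step 2 : per column, σ ‖P_O u'‖² ≤ Σ_v ⟪u',v⟫²; and ‖P_O u'‖ ≥ a - b
  set a : Fin nA → ℝ := fun j => ‖(Submodule.orthogonalProjectionOnto KO (A j) : E)‖ with ha
  set b : Fin nA → ℝ := fun j => ‖(Submodule.orthogonalProjectionOnto KT (A j) : E)‖ with hb
  set q : Fin nA → ℝ := fun j => max (a j - b j) 0 with hq
  have step2 : ∀ j : Fin nA, q j ^ 2 ≤ ‖(Submodule.orthogonalProjectionOnto KO (u' j) : E)‖ ^ 2 := by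
    intro j
    have hlin : (Submodule.orthogonalProjectionOnto KO (u' j) : E) =
        (Submodule.orthogonalProjectionOnto KO (A j) : E) -
          (Submodule.orthogonalProjectionOnto KO ((Submodule.orthogonalProjectionOnto KT (A j) : E)) : E) := by
      rw [hu']
      push_cast [map_sub]
      rfl
    have htri : a j - b j ≤ ‖(Submodule.orthogonalProjectionOnto KO (u' j) : E)‖ := by
      have h1 : a j ≤ ‖(Submodule.orthogonalProjectionOnto KO (u' j) : E)‖ +
          ‖(Submodule.orthogonalProjectionOnto KO ((Submodule.orthogonalProjectionOnto KT (A j) : E)) : E)‖ := by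
        rw [ha]
        calc ‖(Submodule.orthogonalProjectionOnto KO (A j) : E)‖
            = ‖(Submodule.orthogonalProjectionOnto KO (u' j) : E) +
              (Submodule.orthogonalProjectionOnto KO ((Submodule.orthogonalProjectionOnto KT (A j) : E)) : E)‖ := by
              rw [hlin]; congr 1; abel
          _ ≤ _ := norm_add_le _ _
      have h2 : ‖(Submodule.orthogonalProjectionOnto KO ((Submodule.orthogonalProjectionOnto KT (A j) : E)) : E)‖ ≤ b j :=
        proj_norm_le' KO _
      linarith
    rcases le_or_gt (a j - b j) 0 with hab | hab
    · have : q j = 0 := max_eq_right hab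
      rw [this]
      simpa using sq_nonneg ‖(Submodule.orthogonalProjectionOnto KO (u' j) : E)‖
    · have : q j = a j - b j := max_eq_left (le_of_lt hab)
      rw [this]
      have hn : (0:ℝ) ≤ ‖(Submodule.orthogonalProjectionOnto KO (u' j) : E)‖ := norm_nonneg _
      nlinarith
  have step2' : sigmaMin OPT * ∑ j, q j ^ 2 ≤ ∑ j, ∑ v ∈ OPT, ⟪u' j, v⟫ ^ 2 := by
    rw [Finset.mul_sum]
    apply Finset.sum_le_sum
    intro j _
    calc sigmaMin OPT * q j ^ 2 ≤
        sigmaMin OPT * ‖(Submodule.orthogonalProjectionOnto KO (u' j) : E)‖ ^ 2 :=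
          mul_le_mul_of_nonneg_left (step2 j) hσ0
      _ ≤ ∑ v ∈ OPT, ⟪u' j, v⟫ ^ 2 := sigma_proj_le OPT hσ0 (u' j)
  -- step 3 : scalar inequality
  have hfO : fMat A OPT = ∑ j, a j ^ 2 := rfl
  have hfT : fMat A Tb = ∑ j, b j ^ 2 := rfl
  have hann : ∀ j, 0 ≤ a j := fun j => norm_nonneg _
  have hbnn : ∀ j, 0 ≤ b j := fun j => norm_nonneg _
  have hqnn : ∀ j, 0 ≤ q j := fun j => le_max_right _ _
  have h1 : Δ ≤ ∑ j, q j * (a j + b j) := by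
    have : ∀ j : Fin nA, a j ^ 2 - b j ^ 2 ≤ q j * (a j + b j) := by
      intro j
      rcases le_or_gt (a j - b j) 0 with hab | hab
      · have hqj : q j = 0 := max_eq_right hab
        rw [hqj]
        nlinarith [hann j, hbnn j]
      · have hqj : q j = a j - b j := max_eq_left (le_of_lt hab)
        rw [hqj]; ring_nf; nlinarith [hann j, hbnn j]
    calc Δ = ∑ j, (a j ^ 2 - b j ^ 2) := by
          rw [hΔdef, hfO, hfT, ← Finset.sum_sub_distrib]
      _ ≤ ∑ j, q j * (a j + b j) := Finset.sum_le_sum fun j _ => this j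
  have hCS : (∑ j, q j * (a j + b j)) ^ 2 ≤ (∑ j, q j ^ 2) * (∑ j, (a j + b j) ^ 2) :=
    Finset.sum_mul_sq_le_sq_mul_sq _ _ _
  have h3 : (∑ j, (a j + b j) ^ 2) ≤ 4 * fMat A OPT := by
    have : ∀ j : Fin nA, (a j + b j) ^ 2 ≤ 2 * a j ^ 2 + 2 * b j ^ 2 := by
      intro j; nlinarith [sq_nonneg (a j - b j)]
    calc (∑ j, (a j + b j) ^ 2) ≤ ∑ j, (2 * a j ^ 2 + 2 * b j ^ 2) :=
          Finset.sum_le_sum fun j _ => this j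
      _ = 2 * fMat A OPT + 2 * fMat A Tb := by
          rw [hfO, hfT, Finset.sum_add_distrib, ← Finset.mul_sum, ← Finset.mul_sum]
      _ ≤ 4 * fMat A OPT := by linarith
  have hq2nn : 0 ≤ ∑ j, q j ^ 2 := Finset.sum_nonneg fun j _ => sq_nonneg _
  have hΔ2 : Δ ^ 2 ≤ (∑ j, q j ^ 2) * (4 * fMat A OPT) := by
    have hs : 0 ≤ ∑ j, q j * (a j + b j) := le_trans (le_of_lt hΔpos) h1
    have h4 : Δ ^ 2 ≤ (∑ j, q j * (a j + b j)) ^ 2 := by nlinarith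
    have h5 : (∑ j, q j ^ 2) * (∑ j, (a j + b j) ^ 2) ≤ (∑ j, q j ^ 2) * (4 * fMat A OPT) :=
      mul_le_mul_of_nonneg_left h3 hq2nn
    linarith
  -- assemble
  have hfinal : sigmaMin OPT * Δ ^ 2 / (4 * fMat A OPT) ≤ sigmaMin OPT * ∑ j, q j ^ 2 := by
    rw [div_le_iff₀ (by linarith : (0:ℝ) < 4 * fMat A OPT)]
    calc sigmaMin OPT * Δ ^ 2 ≤ sigmaMin OPT * ((∑ j, q j ^ 2) * (4 * fMat A OPT)) :=
          mul_le_mul_of_nonneg_left hΔ2 hσ0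
      _ = sigmaMin OPT * (∑ j, q j ^ 2) * (4 * fMat A OPT) := by ring
  linarith [le_trans step2' step1']

end LemmaA
section Counting
variable {ι : Type*} [DecidableEq ι]

lemma swap_maps_to {O : Finset ι} {v w : ι} (hv : v ∈ O) (hw : w ∈ O) :
    ∀ x, x ∈ O ↔ Equiv.swap v w x ∈ O := by
  intro x
  rcases eq_or_ne x v with rfl | hxv
  · simp [Equiv.swap_apply_left, hv, hw]
  rcases eq_or_ne x w with rfl | hxw
  · simp [Equiv.swap_apply_right, hv, hw]
  · rw [Equiv.swap_apply_of_ne_of_ne hxv hxw]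

lemma swap_image_inter {O : Finset ι} {v w : ι} (hv : v ∈ O) (hw : w ∈ O) (R : Finset ι) :
    (R.image (Equiv.swap v w)) ∩ O = (R ∩ O).image (Equiv.swap v w) := by
  ext x
  simp only [Finset.mem_inter, Finset.mem_image]
  constructor
  · rintro ⟨⟨y, hyR, rfl⟩, hxO⟩
    exact ⟨y, ⟨hyR, by rwa [swap_maps_to hv hw y]⟩, rfl⟩
  · rintro ⟨y, ⟨hyR, hyO⟩, rfl⟩
    exact ⟨⟨y, hyR, rfl⟩, by rwa [← swap_maps_to hv hw y]⟩

lemma swap_filter_maps {N O : Finset ι} (hON : O ⊆ N) (s' : ℕ)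
    (v w : ι) (hv : v ∈ O) (hw : w ∈ O) :
    ∀ R ∈ (N.powersetCard s').filter (fun R => v ∈ R),
      R.image (Equiv.swap v w) ∈ (N.powersetCard s').filter (fun R => w ∈ R) := by
  intro R hR
  rw [Finset.mem_filter, Finset.mem_powersetCard] at hR ⊢
  obtain ⟨⟨hsub, hcard⟩, hvR⟩ := hR
  refine ⟨⟨?_, by rw [Finset.card_image_of_injective _ (Equiv.swap v w).injective]; exact hcard⟩,
    ?_⟩
  · intro x hx
    obtain ⟨y, hyR, rfl⟩ := Finset.mem_image.1 hx
    rw [← swap_maps_to (hON hv) (hON hw) y]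
    exact hsub hyR
  · exact Finset.mem_image.2 ⟨v, hvR, Equiv.swap_apply_left v w⟩

lemma swap_image_image (v w : ι) (R : Finset ι) :
    (R.image (Equiv.swap v w)).image (Equiv.swap v w) = R := by
  rw [Finset.image_image]
  have : (Equiv.swap v w) ∘ (Equiv.swap v w) = id := by
    funext x; simp [Function.comp, Equiv.swap_apply_self]
  rw [this, Finset.image_id]

lemma swap_weight_sum {N O : Finset ι} (hON : O ⊆ N) (s' : ℕ)
    {v w : ι} (hv : v ∈ O) (hw : w ∈ O) :
    ∑ R ∈ (N.powersetCard s').filter (fun R => v ∈ R), (((R ∩ O).card : ℝ))⁻¹ =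
      ∑ R ∈ (N.powersetCard s').filter (fun R => w ∈ R), (((R ∩ O).card : ℝ))⁻¹ := by
  refine Finset.sum_nbij' (fun R => R.image (Equiv.swap v w)) (fun R => R.image (Equiv.swap v w))
    (swap_filter_maps hON s' v w hv hw) ?_ (fun R _ => swap_image_image v w R)
    (fun R _ => swap_image_image v w R) ?_
  · intro R hR
    have h2 := swap_filter_maps hON s' w v hw hv R hR
    rwa [Equiv.swap_comm w v] at h2
  · intro R _
    rw [swap_image_inter hv hw, Finset.card_image_of_injective _ (Equiv.swap v w).injective]

/-- Key exchangeability identity. -/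
lemma count_avg {N O : Finset ι} (hON : O ⊆ N) (hO : O.Nonempty) (s' : ℕ) (g : ι → ℝ) :
    ∑ R ∈ N.powersetCard s', (∑ x ∈ R ∩ O, g x) / ((R ∩ O).card : ℝ) =
      (((N.powersetCard s').filter (fun R => (R ∩ O).Nonempty)).card : ℝ) *
        ((∑ x ∈ O, g x) / (O.card : ℝ)) := by
  classical
  set P := N.powersetCard s' with hP
  set S : ι → ℝ := fun x => ∑ R ∈ P.filter (fun R => x ∈ R), (((R ∩ O).card : ℝ))⁻¹ with hS
  have key : ∀ g : ι → ℝ,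
      (∑ R ∈ P, (∑ x ∈ R ∩ O, g x) / ((R ∩ O).card : ℝ)) = ∑ x ∈ O, g x * S x := by
    intro g
    have inner : ∀ R : Finset ι, (∑ x ∈ R ∩ O, g x) / ((R ∩ O).card : ℝ) =
        ∑ x ∈ O, (if x ∈ R then g x * (((R ∩ O).card : ℝ))⁻¹ else 0) := by
      intro R
      rw [← Finset.sum_filter]
      have : O.filter (fun x => x ∈ R) = R ∩ O := by
        rw [Finset.filter_mem_eq_inter, Finset.inter_comm]
      rw [this, Finset.sum_div]
      exact Finset.sum_congr rfl fun x _ => div_eq_mul_inv _ _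
    rw [Finset.sum_congr rfl fun R _ => inner R, Finset.sum_comm]
    refine Finset.sum_congr rfl fun x _ => ?_
    rw [hS, Finset.mul_sum, Finset.sum_filter]
  have hx0 := hO.choose_spec
  set x0 := hO.choose with hx0def
  have hSconst : ∀ x ∈ O, S x = S x0 := fun x hx => swap_weight_sum hON s' hx hx0
  have hones : (((P.filter (fun R => (R ∩ O).Nonempty)).card : ℝ)) = (O.card : ℝ) * S x0 := by
    have h1 := key (fun _ => 1)
    have h2 : ∀ R ∈ P, (∑ x ∈ R ∩ O, (1:ℝ)) / ((R ∩ O).card : ℝ) =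
        (if (R ∩ O).Nonempty then (1:ℝ) else 0) := by
      intro R _
      rcases (R ∩ O).eq_empty_or_nonempty with he | hne
      · simp [he]
      · rw [if_pos hne, Finset.sum_const, nsmul_eq_mul, mul_one]
        rw [div_self]
        exact Nat.cast_ne_zero.2 (Finset.card_ne_zero_of_mem hne.choose_spec)
    rw [Finset.sum_congr rfl h2, Finset.sum_boole] at h1
    rw [h1]
    rw [Finset.sum_congr rfl (fun x hx => by rw [one_mul, hSconst x hx]), Finset.sum_const,
      nsmul_eq_mul]
  rw [key g, Finset.sum_congr rfl (fun x hx => by rw [hSconst x hx]), ← Finset.sum_mul, hones]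
  have hOcard : (O.card : ℝ) ≠ 0 := Nat.cast_ne_zero.2 (Finset.card_ne_zero_of_mem hx0)
  field_simp

end Counting

section Miss
variable {ι : Type*} [DecidableEq ι]

lemma miss_filter (N O : Finset ι) (s' : ℕ) :
    (N.powersetCard s').filter (fun R => ¬ (R ∩ O).Nonempty) = (N \ O).powersetCard s' := by
  ext R
  simp only [Finset.mem_filter, Finset.mem_powersetCard, Finset.not_nonempty_iff_eq_empty,
    Finset.subset_sdiff, ← Finset.disjoint_iff_inter_eq_empty]
  tauto

end Miss
section ChooseBounds

lemma choose_step (t n s : ℕ) (htn : t ≤ n) :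
    (t - 1).choose s * n ≤ t.choose s * (n - s) := by
  rcases t with _ | t
  · rcases Nat.eq_zero_or_pos s with rfl | hs
    · simp
    · have : Nat.choose 0 s = 0 := Nat.choose_eq_zero_of_lt hs
      simp [this]
  · -- t+1 case : identity (t.choose s) * (t+1) = ((t+1).choose s) * (t+1-s)
    have hid := Nat.choose_mul_succ_eq t s
    have hpos : 0 < t + 1 := Nat.succ_pos t
    apply Nat.le_of_mul_le_mul_right _ hpos
    have e1 : (t + 1 - 1).choose s * n * (t + 1) = (t.choose s * (t+1)) * n := by
      simp; ring
    rw [e1, hid]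
    have e2 : (t+1).choose s * (n - s) * (t + 1) = (t+1).choose s * ((n - s) * (t+1)) := by ring
    rw [e2, Nat.mul_assoc]
    apply Nat.mul_le_mul_left
    -- (t+1-s) * n ≤ (n-s) * (t+1)
    rcases le_or_gt (t+1) s with hst | hst
    · simp [Nat.sub_eq_zero_of_le hst]
    · have h1 : s ≤ t + 1 := le_of_lt hst
      have h2 : s ≤ n := le_trans h1 htn
      zify [h1, h2]
      nlinarith [Int.ofNat_le.2 htn, Int.ofNat_le.2 h1]

lemma choose_pow (n s o : ℕ) : (n - o).choose s * n ^ o ≤ n.choose s * (n - s) ^ o := by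
  induction o with
  | zero => simp
  | succ o ih =>
    have step := choose_step (n - o) n s (Nat.sub_le n o)
    have e0 : n - (o + 1) = (n - o) - 1 := by omega
    calc (n - (o+1)).choose s * n ^ (o+1) = ((n - o - 1).choose s * n) * n ^ o := by
          rw [e0]; ring
      _ ≤ ((n - o).choose s * (n - s)) * n ^ o := Nat.mul_le_mul_right _ step
      _ = ((n - o).choose s * n ^ o) * (n - s) := by ring
      _ ≤ (n.choose s * (n - s) ^ o) * (n - s) := Nat.mul_le_mul_right _ ih
      _ = n.choose s * (n - s) ^ (o+1) := by ring

lemma exp_convex_bound {t A : ℝ} (ht0 : 0 ≤ t) (ht1 : t ≤ 1) :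
    Real.exp (t * A) ≤ t * Real.exp A + (1 - t) := by
  have h := convexOn_exp.2 (Set.mem_univ A) (Set.mem_univ (0:ℝ)) ht0 (by linarith : (0:ℝ) ≤ 1 - t)
    (by ring)
  simp only [smul_eq_mul, mul_zero, add_zero, Real.exp_zero, mul_one] at h
  linarith

/-- Main hypergeometric/analytic bound : the miss count is small. -/
lemma miss_bound {n' s' o k : ℕ} {δ : ℝ} (hn : 1 ≤ n') (hs : s' ≤ n') (ho1 : 1 ≤ o)
    (hok : o ≤ k) (hk : 1 ≤ k) (hδ0 : 0 < δ) (hδ1 : δ < 1)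
    (hsk : Real.log (1 / δ) * n' ≤ (k : ℝ) * s') :
    ((n' - o).choose s' : ℝ) ≤ (n'.choose s' : ℝ) * (1 - ((o : ℝ) / k) * (1 - δ)) := by
  have hnR : (0:ℝ) < n' := by exact_mod_cast hn
  have hkR : (0:ℝ) < k := by exact_mod_cast hk
  have hoR : (0:ℝ) < o := by exact_mod_cast ho1
  set x : ℝ := (s' : ℝ) / n' with hx
  set t : ℝ := (o : ℝ) / k with ht
  have ht0 : 0 ≤ t := by positivity
  have ht1 : t ≤ 1 := by
    rw [ht, div_le_one hkR]; exact_mod_cast hok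
  -- cast the combinatorial bound
  have hcomb : ((n' - o).choose s' : ℝ) * (n' : ℝ) ^ o ≤
      (n'.choose s' : ℝ) * ((n' : ℝ) - s') ^ o := by
    have := choose_pow n' s' o
    have hc : (((n' - o).choose s' * n' ^ o : ℕ) : ℝ) ≤ ((n'.choose s' * (n' - s') ^ o : ℕ) : ℝ) :=
      Nat.cast_le.2 this
    push_cast [Nat.cast_sub hs] at hc
    convert hc using 2
  -- so miss ≤ choose * (1-x)^o
  have hmain : ((n' - o).choose s' : ℝ) ≤ (n'.choose s' : ℝ) * (1 - x) ^ o := by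
    have hne : ((n' : ℝ)) - s' = (n' : ℝ) * (1 - x) := by
      rw [hx]; field_simp
    rw [hne, mul_pow] at hcomb
    have hpow : (0:ℝ) < (n' : ℝ) ^ o := by positivity
    calc ((n' - o).choose s' : ℝ) = ((n' - o).choose s' : ℝ) * (n' : ℝ) ^ o / (n' : ℝ) ^ o := by
          field_simp
      _ ≤ (n'.choose s' : ℝ) * ((n' : ℝ) ^ o * (1 - x) ^ o) / (n' : ℝ) ^ o := by
          gcongr
      _ = (n'.choose s' : ℝ) * (1 - x) ^ o := by field_simp
  -- analytic chain
  have hx01 : 0 ≤ x := by positivity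
  have hx1 : x ≤ 1 := by
    rw [hx, div_le_one hnR]; exact_mod_cast hs
  have hchain : (1 - x) ^ o ≤ 1 - t * (1 - δ) := by
    have h1 : (1 - x) ^ o ≤ Real.exp (-x) ^ o := by
      apply pow_le_pow_left₀ (by linarith)
      linarith [Real.add_one_le_exp (-x)]
    have h2 : Real.exp (-x) ^ o = Real.exp ((o : ℝ) * (-x)) := (Real.exp_nat_mul _ o).symm
    have hL : 0 < Real.log (1 / δ) := by
      apply Real.log_pos
      rw [one_div]
      exact (one_lt_inv_iff₀).2 ⟨hδ0, hδ1⟩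
    have hxL : Real.log (1 / δ) / k ≤ x := by
      have h0 : Real.log (1 / δ) ≤ (k : ℝ) * s' / n' := by
        rw [le_div_iff₀ hnR]; exact hsk
      calc Real.log (1/δ) / k ≤ ((k : ℝ) * s' / n') / k := by gcongr
        _ = x := by rw [hx]; field_simp
    have h3 : (o : ℝ) * (-x) ≤ t * Real.log δ := by
      have hlogδ : Real.log δ = -Real.log (1/δ) := by
        rw [one_div, Real.log_inv]; ring
      rw [hlogδ, ht]
      have : Real.log (1/δ) / k * (o : ℝ) ≤ x * o :=
        mul_le_mul_of_nonneg_right hxL (le_of_lt hoR)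
      calc (o : ℝ) * (-x) = -(x * o) := by ring
        _ ≤ -(Real.log (1/δ) / k * o) := by linarith
        _ = (o : ℝ) / k * -Real.log (1/δ) := by ring
    have h4 : Real.exp ((o : ℝ) * (-x)) ≤ Real.exp (t * Real.log δ) := Real.exp_le_exp.2 h3
    have h5 : Real.exp (t * Real.log δ) ≤ t * δ + (1 - t) := by
      have := exp_convex_bound (A := Real.log δ) ht0 ht1
      rwa [Real.exp_log hδ0] at this
    calc (1 - x) ^ o ≤ Real.exp ((o : ℝ) * (-x)) := by rw [← h2]; exact h1
      _ ≤ t * δ + (1 - t) := le_trans h4 h5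
      _ = 1 - t * (1 - δ) := by ring
  calc ((n' - o).choose s' : ℝ) ≤ (n'.choose s' : ℝ) * (1 - x) ^ o := hmain
    _ ≤ (n'.choose s' : ℝ) * (1 - t * (1 - δ)) := by
        apply mul_le_mul_of_nonneg_left hchain (Nat.cast_nonneg _)
  
end ChooseBounds
section StepBound
variable {m nA nB : ℕ}
local notation "E" => EuclideanSpace ℝ (Fin m)

lemma alg_helper (pc od kd fd dd sd del : ℝ) (ho : od ≠ 0) (hk : kd ≠ 0) (hf : fd ≠ 0) :
    (pc * ((od / kd) * (1 - del))) * (sd * dd ^ 2 / (4 * fd) / od) =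
      pc * (((1 - del) * sd / (4 * kd * fd)) * dd ^ 2) := by
  field_simp

lemma step_bound (A : Fin nA → EuclideanSpace ℝ (Fin m))
    (B : Fin nB → EuclideanSpace ℝ (Fin m)) (hB : ∀ j, ‖B j‖ = 1)
    (k : ℕ) (hk : 1 ≤ k) (OPT : Finset (EuclideanSpace ℝ (Fin m)))
    (Oidx : Finset (Fin nB)) (himg : Oidx.image B = OPT) (hOcard : Oidx.card = k)
    (hOPTcard : OPT.card = k) (hσ : 0 < sigmaMin OPT) (hf : 0 < fMat A OPT)
    (δ : ℝ) (hδ0 : 0 < δ) (hδ1 : δ < 1)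
    (pick : Finset (Fin nB) → Finset (Fin nB) → Fin nB)
    (hpick : ∀ T R : Finset (Fin nB), R.Nonempty →
      pick T R ∈ R ∧ ∀ j ∈ R,
        fMat A (insert (B j) (T.image B)) ≤ fMat A (insert (B (pick T R)) (T.image B)))
    (s : ℕ) (hs : (nB : ℝ) * Real.log (1 / δ) / k ≤ (s : ℝ))
    (T : Finset (Fin nB)) :
    fMat A (T.image B) + ((1 - δ) * sigmaMin OPT / (4 * k * fMat A OPT)) *
        (max (fMat A OPT - fMat A (T.image B)) 0) ^ 2 ≤
      (∑ R ∈ (Finset.univ \ T).powersetCard (min s (Finset.univ \ T).card),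
          fMat A ((if R.Nonempty then insert (pick T R) T else T).image B)) /
        (((Finset.univ \ T).powersetCard (min s (Finset.univ \ T).card)).card : ℝ) := by
  classical
  set Tb : Finset E := T.image B with hTb
  set N : Finset (Fin nB) := Finset.univ \ T with hN
  set s' : ℕ := min s N.card with hs'
  set P : Finset (Finset (Fin nB)) := N.powersetCard s' with hPdef
  set Ost : Finset (Fin nB) := Oidx \ T with hOst
  set g : Fin nB → ℝ := fun j => fMat A (insert (B j) Tb) - fMat A Tb with hg
  set fstar : ℝ := fMat A OPT with hfs
  set σ : ℝ := sigmaMin OPT with hσdef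
  set D : ℝ := max (fstar - fMat A Tb) 0 with hD
  have hPne : P.Nonempty := Finset.powersetCard_nonempty.2 (min_le_right _ _)
  have hPpos : (0 : ℝ) < (P.card : ℝ) := by
    exact_mod_cast Finset.card_pos.2 hPne
  have hgnn : ∀ j, 0 ≤ g j := by
    intro j
    have := fMat_mono A (Finset.subset_insert (B j) Tb)
    rw [hg]; simp only []; linarith
  have hDnn : 0 ≤ D := le_max_right _ _
  rw [le_div_iff₀ hPpos]
  -- pointwise bound
  have hpoint : ∀ R ∈ P, fMat A Tb + (∑ x ∈ R ∩ Ost, g x) / ((R ∩ Ost).card : ℝ) ≤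
      fMat A ((if R.Nonempty then insert (pick T R) T else T).image B) := by
    intro R hR
    rcases (R ∩ Ost).eq_empty_or_nonempty with he | hne
    · rw [he]
      simp only [Finset.sum_empty, Finset.card_empty, Nat.cast_zero, div_zero, add_zero]
      split
      · rw [Finset.image_insert]
        exact fMat_mono A (Finset.subset_insert _ _)
      · exact le_refl _
    · have hRne : R.Nonempty := by
        obtain ⟨x, hx⟩ := hne
        exact ⟨x, (Finset.mem_inter.1 hx).1⟩
      rw [if_pos hRne, Finset.image_insert]
      obtain ⟨hpmem, hpmax⟩ := hpick T R hRne
      have hcard : (0 : ℝ) < ((R ∩ Ost).card : ℝ) := by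
        exact_mod_cast Finset.card_pos.2 hne
      have hle : (∑ x ∈ R ∩ Ost, g x) ≤ ((R ∩ Ost).card : ℝ) * g (pick T R) := by
        have : ∀ x ∈ R ∩ Ost, g x ≤ g (pick T R) := by
          intro x hx
          have hxR : x ∈ R := (Finset.mem_inter.1 hx).1
          have h3 := hpmax x hxR
          rw [← hTb] at h3
          rw [hg]; simp only []
          linarith [h3]
        calc (∑ x ∈ R ∩ Ost, g x) ≤ ∑ _x ∈ R ∩ Ost, g (pick T R) :=
              Finset.sum_le_sum this
          _ = ((R ∩ Ost).card : ℝ) * g (pick T R) := by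
              rw [Finset.sum_const, nsmul_eq_mul]
      have hdiv : (∑ x ∈ R ∩ Ost, g x) / ((R ∩ Ost).card : ℝ) ≤ g (pick T R) := by
        rw [div_le_iff₀ hcard]
        linarith
      have : fMat A (insert (B (pick T R)) Tb) = fMat A Tb + g (pick T R) := by
        rw [hg]; ring
      rw [this]
      linarith
  have hsum : (P.card : ℝ) * fMat A Tb + ∑ R ∈ P, (∑ x ∈ R ∩ Ost, g x) / ((R ∩ Ost).card : ℝ) ≤
      ∑ R ∈ P, fMat A ((if R.Nonempty then insert (pick T R) T else T).image B) := by
    have := Finset.sum_le_sum hpoint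
    rw [Finset.sum_add_distrib, Finset.sum_const, nsmul_eq_mul] at this
    linarith
  -- case analysis on Ost
  rcases Ost.eq_empty_or_nonempty with hOempty | hOne
  · -- OPT already inside T.image B
    have hsub : OPT ⊆ Tb := by
      rw [← himg]
      intro v hv
      obtain ⟨j, hj, rfl⟩ := Finset.mem_image.1 hv
      have hjT : j ∈ T := by
        by_contra hjT
        have : j ∈ Ost := by rw [hOst]; exact Finset.mem_sdiff.2 ⟨hj, hjT⟩
        rw [hOempty] at this
        exact absurd this (Finset.notMem_empty j)
      exact Finset.mem_image_of_mem B hjT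
    have hD0 : D = 0 := by
      rw [hD]
      apply max_eq_right
      have := fMat_mono A hsub
      rw [← hfs] at this
      linarith
    rw [hD0]
    have h0 : ∀ R ∈ P, (0:ℝ) ≤ (∑ x ∈ R ∩ Ost, g x) / ((R ∩ Ost).card : ℝ) := by
      intro R _
      apply div_nonneg (Finset.sum_nonneg fun x _ => hgnn x) (Nat.cast_nonneg _)
    have h1 := Finset.sum_nonneg h0
    norm_num
    nlinarith [hsum]
  · -- main case
    set o : ℕ := Ost.card with ho
    have hopos : 0 < o := Finset.card_pos.2 hOne
    have hoR : (0:ℝ) < o := by exact_mod_cast hopos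
    have hkR : (0:ℝ) < k := by exact_mod_cast hk
    have hON : Ost ⊆ N := by
      rw [hOst, hN]
      exact Finset.sdiff_subset_sdiff (Finset.subset_univ _) (le_refl _)
    have hok : o ≤ k := by
      rw [ho, ← hOcard]
      exact Finset.card_le_card (by rw [hOst]; exact Finset.sdiff_subset)
    -- counting identity
    have hcount := count_avg hON hOne s' g
    rw [← hPdef] at hcount
    set Hc : ℕ := (P.filter (fun R => (R ∩ Ost).Nonempty)).card with hHc
    -- lemma A conversion : ∑ over Ost of g ≥ σ D² / (4 fstar)
    have hBinj : Set.InjOn B Oidx := by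
      apply Finset.injOn_of_card_image_eq
      rw [himg, hOcard, hOPTcard]
    have hsumO : ∑ v ∈ OPT, (fMat A (insert v Tb) - fMat A Tb) = ∑ j ∈ Oidx, g j := by
      rw [← himg, Finset.sum_image (fun x hx y hy h => hBinj hx hy h)]
    have hsumOst : ∑ j ∈ Oidx, g j = ∑ j ∈ Ost, g j := by
      apply (Finset.sum_subset (by rw [hOst]; exact Finset.sdiff_subset) _).symm
      intro j hj hnj
      have hjT : j ∈ T := by
        by_contra hc
        exact hnj (by rw [hOst]; exact Finset.mem_sdiff.2 ⟨hj, hc⟩)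
      have : B j ∈ Tb := Finset.mem_image_of_mem B hjT
      rw [hg]; simp only []
      rw [Finset.insert_eq_self.2 this]
      ring
    have hOPT1 : ∀ v ∈ OPT, ‖v‖ = (1:ℝ) := by
      intro v hv
      rw [← himg] at hv
      obtain ⟨j, _, rfl⟩ := Finset.mem_image.1 hv
      exact hB j
    have hlemA := lemmaA A OPT Tb hOPT1 (le_of_lt hσ) hf
    rw [← hfs, ← hσdef, ← hD, hsumO, hsumOst] at hlemA
    -- hit count bound : (P.card) * (o/k) * (1-δ) ≤ Hc
    have hmisscount : P.card = Hc + ((N.card - o).choose s') := by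
      have h1 := Finset.card_filter_add_card_filter_not
        (s := P) (p := fun R => (R ∩ Ost).Nonempty)
      have h2 : (P.filter (fun R => ¬ (R ∩ Ost).Nonempty)).card = (N.card - o).choose s' := by
        rw [hPdef, miss_filter N Ost s', Finset.card_powersetCard, Finset.card_sdiff_of_subset hON, ho]
      rw [← h1, h2, hHc]
    have hn1 : 1 ≤ N.card := le_trans hopos (Finset.card_le_card hON)
    have hs'N : s' ≤ N.card := min_le_right _ _
    have hmissR : ((N.card - o).choose s' : ℝ) ≤
        (N.card.choose s' : ℝ) * (1 - ((o : ℝ) / k) * (1 - δ)) := by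
      rcases lt_or_ge (N.card - o) s' with hlt | hge
      · rw [Nat.choose_eq_zero_of_lt hlt]
        have ht1 : ((o : ℝ) / k) * (1 - δ) ≤ 1 := by
          have h1 : (o : ℝ) / k ≤ 1 := by
            rw [div_le_one hkR]; exact_mod_cast hok
          nlinarith
        have : (0:ℝ) ≤ (N.card.choose s' : ℝ) := Nat.cast_nonneg _
        simp only [Nat.cast_zero]
        nlinarith
      · -- here s' < N.card (since o ≥ 1), so s' = s
        have hlt : s' < N.card := by omega
        have hs's : s' = s := by
          rw [hs']
          rcases le_or_gt s N.card with h | h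
          · exact min_eq_left h
          · exfalso; rw [hs'] at hlt; omega
        apply miss_bound hn1 hs'N hopos hok hk hδ0 hδ1
        -- log(1/δ) * N.card ≤ k * s'
        have hlog0 : 0 ≤ Real.log (1 / δ) := by
          apply Real.log_nonneg
          rw [le_div_iff₀ hδ0]
          linarith
        have hNnB : ((N.card : ℕ) : ℝ) ≤ (nB : ℝ) := by
          have : N.card ≤ nB := by
            calc N.card ≤ Finset.univ.card := Finset.card_le_univ N
              _ = nB := by rw [Finset.card_univ, Fintype.card_fin]
          exact_mod_cast this
        have hks : (nB : ℝ) * Real.log (1 / δ) ≤ (k : ℝ) * s := by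
          rw [div_le_iff₀ hkR] at hs
          linarith
        rw [hs's]
        calc Real.log (1 / δ) * N.card ≤ Real.log (1 / δ) * nB :=
              mul_le_mul_of_nonneg_left hNnB hlog0
          _ = (nB : ℝ) * Real.log (1 / δ) := by ring
          _ ≤ (k : ℝ) * s := hks
    -- assemble
    have hPc : (P.card : ℝ) = (N.card.choose s' : ℝ) := by
      rw [hPdef, Finset.card_powersetCard]
    have hHcR : (P.card : ℝ) * (((o : ℝ) / k) * (1 - δ)) ≤ (Hc : ℝ) := by
      have hmm : (P.card : ℝ) = (Hc : ℝ) + ((N.card - o).choose s' : ℝ) := by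
        exact_mod_cast congrArg (fun x : ℕ => (x : ℝ)) hmisscount
      rw [hPc] at hmm ⊢
      linarith [hmissR]
    have hfne : fstar ≠ 0 := ne_of_gt hf
    have hone : (0:ℝ) ≤ 1 - δ := by linarith
    have hgsum : 0 ≤ ∑ j ∈ Ost, g j := Finset.sum_nonneg fun j _ => hgnn j
    have hA2 : σ * D ^ 2 / (4 * fstar) / o ≤ (∑ j ∈ Ost, g j) / o :=
      (div_le_div_iff_of_pos_right hoR).2 hlemA
    have hA1nn : 0 ≤ (P.card : ℝ) * (((o : ℝ) / k) * (1 - δ)) :=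
      mul_nonneg (le_of_lt hPpos)
        (mul_nonneg (div_nonneg (le_of_lt hoR) (le_of_lt hkR)) hone)
    have hA2nn : 0 ≤ σ * D ^ 2 / (4 * fstar) / o :=
      div_nonneg (div_nonneg (mul_nonneg (le_of_lt hσ) (sq_nonneg D)) (by linarith))
        (le_of_lt hoR)
    have hkey : ((P.card : ℝ) * (((o : ℝ) / k) * (1 - δ))) * (σ * D ^ 2 / (4 * fstar) / o) ≤
        (Hc : ℝ) * ((∑ j ∈ Ost, g j) / o) :=
      mul_le_mul hHcR hA2 hA2nn (le_trans hA1nn hHcR)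
    have hkey2 : ((P.card : ℝ) * (((o : ℝ) / k) * (1 - δ))) * (σ * D ^ 2 / (4 * fstar) / o) =
        (P.card : ℝ) * (((1 - δ) * σ / (4 * (k : ℝ) * fstar)) * D ^ 2) := by
      exact alg_helper _ _ _ _ _ _ _ (ne_of_gt hoR) (ne_of_gt hkR) hfne
    rw [hkey2] at hkey
    rw [hcount] at hsum
    calc (fMat A Tb + (1 - δ) * σ / (4 * (k : ℝ) * fstar) * D ^ 2) * (P.card : ℝ)
        = (P.card : ℝ) * fMat A Tb +
          (P.card : ℝ) * (((1 - δ) * σ / (4 * (k : ℝ) * fstar)) * D ^ 2) := by ring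
      _ ≤ (P.card : ℝ) * fMat A Tb + (Hc : ℝ) * ((∑ j ∈ Ost, g j) / o) := by linarith
      _ ≤ _ := hsum

end StepBound
section Hfun

noncomputable def Hfun (a y : ℝ) : ℝ := if y ≤ 0 then y else y / (1 + a * y)

lemma Hfun_zero (y : ℝ) : Hfun 0 y = y := by
  unfold Hfun
  split <;> simp

lemma Hfun_denom_pos {a y : ℝ} (ha : 0 ≤ a) (hy : 0 < y) : 0 < 1 + a * y := by nlinarith

lemma Hfun_mono {a : ℝ} (ha : 0 ≤ a) {y z : ℝ} (hyz : y ≤ z) : Hfun a y ≤ Hfun a z := by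
  unfold Hfun
  rcases le_or_gt y 0 with hy | hy
  · rw [if_pos hy]
    rcases le_or_gt z 0 with hz | hz
    · rw [if_pos hz]; exact hyz
    · rw [if_neg (not_le.2 hz)]
      have := Hfun_denom_pos ha hz
      have : 0 < z / (1 + a * z) := div_pos hz this
      linarith
  · rw [if_neg (not_le.2 hy), if_neg (not_le.2 (lt_of_lt_of_le hy hyz))]
    have hz : 0 < z := lt_of_lt_of_le hy hyz
    have h1 := Hfun_denom_pos ha hy
    have h2 := Hfun_denom_pos ha hz
    rw [div_le_div_iff₀ h1 h2]
    nlinarith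

/-- tangent line at `d ≥ 0` lies above `Hfun a`. -/
lemma Hfun_tangent {a : ℝ} (ha : 0 ≤ a) {d : ℝ} (hd : 0 ≤ d) (y : ℝ) :
    Hfun a y ≤ d / (1 + a * d) + (y - d) / (1 + a * d) ^ 2 := by
  have hq : 0 < 1 + a * d := by nlinarith
  have hq2 : 0 < (1 + a * d) ^ 2 := by positivity
  have he : d / (1 + a * d) + (y - d) / (1 + a * d) ^ 2 =
      (d * (1 + a * d) + (y - d)) / (1 + a * d) ^ 2 := by
    field_simp
  rw [he]
  unfold Hfun
  rcases le_or_gt y 0 with hy | hy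
  · rw [if_pos hy, le_div_iff₀ hq2]
    nlinarith [mul_nonneg (mul_nonneg ha hd) hd, mul_nonneg (mul_nonneg ha hd) (neg_nonneg.2 hy),
      mul_nonneg (mul_nonneg (mul_nonneg ha hd) (mul_nonneg ha hd)) (neg_nonneg.2 hy)]
  · rw [if_neg (not_le.2 hy)]
    have hp : 0 < 1 + a * y := Hfun_denom_pos ha hy
    rw [div_le_div_iff₀ hp hq2]
    nlinarith [mul_nonneg ha (sq_nonneg (y - d))]

/-- the key one-step descent inequality for `Hfun`. -/
lemma Hfun_step {c ψ fstar : ℝ} (hc : 0 < c) (hψf : ψ ≤ fstar) (hcf : c * fstar ≤ 1/4)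
    (r : ℕ) :
    Hfun (c * r) (ψ - c * (max ψ 0) ^ 2) ≤ Hfun (c * (r + 1 : ℕ)) ψ := by
  have har : (0:ℝ) ≤ c * r := mul_nonneg (le_of_lt hc) (Nat.cast_nonneg r)
  rcases le_or_gt ψ 0 with hψ | hψ
  · have : max ψ 0 = 0 := max_eq_right hψ
    rw [this]
    norm_num
    unfold Hfun
    rw [if_pos hψ, if_pos hψ]
  · have hmax : max ψ 0 = ψ := max_eq_left (le_of_lt hψ)
    rw [hmax]
    have hcψ : c * ψ ≤ 1/4 := le_trans (by nlinarith) hcf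
    set y : ℝ := ψ - c * ψ ^ 2 with hy
    have hypos : 0 < y := by nlinarith
    unfold Hfun
    rw [if_neg (not_le.2 hypos), if_neg (not_le.2 hψ)]
    have h1 : 0 < 1 + c * (r : ℝ) * y := Hfun_denom_pos har hypos
    have h2 : 0 < 1 + c * ((r : ℕ) + 1 : ℕ) * ψ := by
      push_cast
      have : (0:ℝ) ≤ c * ((r : ℝ) + 1) := by positivity
      nlinarith
    rw [div_le_div_iff₀ h1 h2]
    push_cast
    nlinarith [mul_nonneg (mul_nonneg (mul_nonneg hc.le hc.le) hc.le) (Nat.cast_nonneg r),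
      sq_nonneg ψ, mul_nonneg (mul_nonneg hc.le hc.le) (le_of_lt hψ)]

end Hfun
section Descent
variable {m nA nB : ℕ}
local notation "E" => EuclideanSpace ℝ (Fin m)

lemma lazyExp_nonneg (A : Fin nA → EuclideanSpace ℝ (Fin m))
    (B : Fin nB → EuclideanSpace ℝ (Fin m))
    (pick : Finset (Fin nB) → Finset (Fin nB) → Fin nB) (s : ℕ) :
    ∀ (r : ℕ) (T : Finset (Fin nB)), 0 ≤ lazyExp A B pick s r T := by
  intro r
  induction r with
  | zero => intro T; exact fMat_nonneg A _
  | succ r ih =>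
    intro T
    show 0 ≤ (∑ R ∈ _, lazyExp A B pick s r _) / _
    apply div_nonneg (Finset.sum_nonneg fun R _ => ih _) (Nat.cast_nonneg _)

lemma fMat_empty (A : Fin nA → EuclideanSpace ℝ (Fin m)) :
    fMat A (∅ : Finset (EuclideanSpace ℝ (Fin m))) = 0 := by
  unfold fMat fVec
  apply Finset.sum_eq_zero
  intro j _
  have h1 : ((∅ : Finset E) : Set E) = (∅ : Set E) := Finset.coe_empty
  simp [h1, Submodule.span_empty, Submodule.orthogonalProjectionOnto_bot]

lemma sigmaMin_le_one (S : Finset (EuclideanSpace ℝ (Fin m))) {v0 : EuclideanSpace ℝ (Fin m)}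
    (hv0 : v0 ∈ S) (hn : ‖v0‖ = 1) : sigmaMin S ≤ 1 := by
  classical
  have h := sigmaMin_le S (fun v => if v = (⟨v0, hv0⟩ : {x // x ∈ S}) then 1 else 0) ?_
  · have hsum : (∑ v : {x // x ∈ S}, (if v = (⟨v0, hv0⟩ : {x // x ∈ S}) then (1:ℝ) else 0) •
        (v : E)) = v0 := by
      rw [Finset.sum_eq_single (⟨v0, hv0⟩ : {x // x ∈ S})]
      · simp
      · intro b _ hb; simp [hb]
      · intro hb; exact absurd (Finset.mem_univ _) hb
    rw [hsum, hn] at h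
    simpa using h
  · rw [Finset.sum_eq_single (⟨v0, hv0⟩ : {x // x ∈ S})]
    · simp
    · intro b _ hb; simp [hb]
    · intro hb; exact absurd (Finset.mem_univ _) hb

lemma exists_Oidx (B : Fin nB → EuclideanSpace ℝ (Fin m)) (OPT : Finset (EuclideanSpace ℝ (Fin m)))
    (hsub : OPT ⊆ Finset.image B Finset.univ) :
    ∃ I : Finset (Fin nB), I.image B = OPT ∧ I.card = OPT.card := by
  classical
  induction OPT using Finset.induction_on with
  | empty => exact ⟨∅, by simp, by simp⟩
  | @insert v S hv ih =>
    obtain ⟨I, hI1, hI2⟩ := ih (subset_trans (Finset.subset_insert v S) hsub)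
    obtain ⟨j, _, hj⟩ := Finset.mem_image.1 (hsub (Finset.mem_insert_self v S))
    have hjI : j ∉ I := by
      intro hjI
      exact hv (by rw [← hI1]; exact hj ▸ Finset.mem_image_of_mem B hjI)
    exact ⟨insert j I, by rw [Finset.image_insert, hI1, hj],
      by rw [Finset.card_insert_of_notMem hjI, hI2, Finset.card_insert_of_notMem hv]⟩

lemma descent (A : Fin nA → EuclideanSpace ℝ (Fin m)) (B : Fin nB → EuclideanSpace ℝ (Fin m))
    (pick : Finset (Fin nB) → Finset (Fin nB) → Fin nB) (s : ℕ) (fstar c : ℝ)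
    (hc : 0 < c) (hcf : c * fstar ≤ 1/4)
    (hstep : ∀ T : Finset (Fin nB),
      fMat A (T.image B) + c * (max (fstar - fMat A (T.image B)) 0) ^ 2 ≤
        (∑ R ∈ (Finset.univ \ T).powersetCard (min s (Finset.univ \ T).card),
            fMat A ((if R.Nonempty then insert (pick T R) T else T).image B)) /
          (((Finset.univ \ T).powersetCard (min s (Finset.univ \ T).card)).card : ℝ)) :
    ∀ (r : ℕ) (T : Finset (Fin nB)),
      fstar - Hfun (c * r) (fstar - fMat A (T.image B)) ≤ lazyExp A B pick s r T := by
  intro r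
  induction r with
  | zero =>
    intro T
    rw [Nat.cast_zero, mul_zero, Hfun_zero]
    show _ ≤ fMat A (T.image B)
    linarith
  | succ r ih =>
    intro T
    set ψ : ℝ := fstar - fMat A (T.image B) with hψ
    set a : ℝ := c * r with ha
    have ha0 : 0 ≤ a := mul_nonneg (le_of_lt hc) (Nat.cast_nonneg r)
    set N : Finset (Fin nB) := Finset.univ \ T with hN
    set s' : ℕ := min s N.card with hs'
    set P : Finset (Finset (Fin nB)) := N.powersetCard s' with hP
    have hPne : P.Nonempty := Finset.powersetCard_nonempty.2 (min_le_right _ _)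
    have hPpos : (0 : ℝ) < (P.card : ℝ) := by exact_mod_cast Finset.card_pos.2 hPne
    show fstar - Hfun (c * (r+1 : ℕ)) ψ ≤
      (∑ R ∈ P, lazyExp A B pick s r (if R.Nonempty then insert (pick T R) T else T)) /
        (P.card : ℝ)
    rw [le_div_iff₀ hPpos]
    set F' : Finset (Fin nB) → ℝ :=
      fun R => fMat A ((if R.Nonempty then insert (pick T R) T else T).image B) with hF'
    set q : ℝ := fstar - (∑ R ∈ P, F' R) / (P.card : ℝ) with hq
    set d : ℝ := max q 0 with hd
    have hd0 : 0 ≤ d := le_max_right _ _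
    have hIH : ∀ R ∈ P, fstar - Hfun a (fstar - F' R) ≤
        lazyExp A B pick s r (if R.Nonempty then insert (pick T R) T else T) :=
      fun R _ => ih _
    have hsum1 : (P.card : ℝ) * fstar - ∑ R ∈ P, Hfun a (fstar - F' R) ≤
        ∑ R ∈ P, lazyExp A B pick s r (if R.Nonempty then insert (pick T R) T else T) := by
      have := Finset.sum_le_sum hIH
      rw [Finset.sum_sub_distrib, Finset.sum_const, nsmul_eq_mul] at this
      linarith
    -- tangent bound on each term
    have htan : ∀ R ∈ P, Hfun a (fstar - F' R) ≤
        d / (1 + a * d) + ((fstar - F' R) - d) / (1 + a * d) ^ 2 :=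
      fun R _ => Hfun_tangent ha0 hd0 _
    have hsumpsi : ∑ R ∈ P, (fstar - F' R) = (P.card : ℝ) * q := by
      rw [Finset.sum_sub_distrib, Finset.sum_const, nsmul_eq_mul, hq, mul_sub,
        mul_div_cancel₀ _ (ne_of_gt hPpos)]
    have hsum2 : ∑ R ∈ P, Hfun a (fstar - F' R) ≤
        (P.card : ℝ) * (d / (1 + a * d) + (q - d) / (1 + a * d) ^ 2) := by
      calc ∑ R ∈ P, Hfun a (fstar - F' R) ≤
          ∑ R ∈ P, (d / (1 + a * d) + ((fstar - F' R) - d) / (1 + a * d) ^ 2) :=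
            Finset.sum_le_sum htan
        _ = (P.card : ℝ) * (d / (1 + a * d)) +
            ((∑ R ∈ P, (fstar - F' R)) - (P.card : ℝ) * d) / (1 + a * d) ^ 2 := by
            rw [Finset.sum_add_distrib, Finset.sum_const, nsmul_eq_mul]
            congr 1
            rw [← Finset.sum_div, Finset.sum_sub_distrib, Finset.sum_const, nsmul_eq_mul]
        _ = (P.card : ℝ) * (d / (1 + a * d) + (q - d) / (1 + a * d) ^ 2) := by
            rw [hsumpsi, mul_add, ← mul_sub, mul_div_assoc]
    -- tangent at d equals Hfun at q
    have hlq : d / (1 + a * d) + (q - d) / (1 + a * d) ^ 2 = Hfun a q := by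
      rcases le_or_gt q 0 with hq0 | hq0
      · have hdq : d = 0 := max_eq_right hq0
        rw [hdq]
        unfold Hfun
        rw [if_pos hq0]
        norm_num
      · have hdq : d = q := max_eq_left (le_of_lt hq0)
        rw [hdq]
        unfold Hfun
        rw [if_neg (not_le.2 hq0)]
        norm_num
    -- hstep gives q ≤ ψ - c (max ψ 0)²
    have hqle : q ≤ ψ - c * (max ψ 0) ^ 2 := by
      have := hstep T
      rw [← hN, ← hs', ← hP] at this
      have h2 : (∑ R ∈ P, F' R) / (P.card : ℝ) =
          (∑ R ∈ P, fMat A ((if R.Nonempty then insert (pick T R) T else T).image B)) /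
            (P.card : ℝ) := rfl
      rw [hq, hψ]
      rw [h2]
      linarith
    have hψf : ψ ≤ fstar := by
      rw [hψ]
      have := fMat_nonneg A (T.image B)
      linarith
    have hchain : Hfun a q ≤ Hfun (c * (r + 1 : ℕ)) ψ := by
      calc Hfun a q ≤ Hfun a (ψ - c * (max ψ 0) ^ 2) := Hfun_mono ha0 hqle
        _ ≤ Hfun (c * (r + 1 : ℕ)) ψ := by rw [ha]; exact Hfun_step hc hψf hcf r
    have hfin : (P.card : ℝ) * Hfun a q ≤ (P.card : ℝ) * Hfun (c * (r+1:ℕ)) ψ :=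
      mul_le_mul_of_nonneg_left hchain (le_of_lt hPpos)
    rw [hlq] at hsum2
    calc (fstar - Hfun (c * (r+1:ℕ)) ψ) * (P.card : ℝ)
        = (P.card : ℝ) * fstar - (P.card : ℝ) * Hfun (c * (r+1:ℕ)) ψ := by ring
      _ ≤ (P.card : ℝ) * fstar - (P.card : ℝ) * Hfun a q := by linarith
      _ ≤ (P.card : ℝ) * fstar - ∑ R ∈ P, Hfun a (fstar - F' R) := by linarith
      _ ≤ _ := hsum1

end Descent
lemma final_numeric (ε δ Fs X : ℝ) (hε : 0 < ε) (hδ0 : 0 < δ) (hδ1 : δ < 1)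
    (hεδ : ε + δ ≤ 1) (hFs : 0 < Fs) (hX : 4 * (1 - δ) / ε ≤ X) (hXnn : 0 ≤ X) :
    Fs / (1 + X) ≤ (ε + δ) * Fs := by
  have hden : (0:ℝ) < 1 + X := by linarith
  rw [div_le_iff₀ hden]
  have hkey : ε ≤ 4 * (1 - δ) * (ε + δ) := by
    nlinarith [mul_le_mul_of_nonneg_left (show ε ≤ 1 - δ by linarith) hδ0.le]
  have h4 : (1:ℝ) ≤ (ε + δ) * (4 * (1 - δ) / ε) := by
    rw [← mul_div_assoc, le_div_iff₀ hε]
    nlinarith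
  have h5 : (ε + δ) * (4 * (1 - δ) / ε) ≤ (ε + δ) * X :=
    mul_le_mul_of_nonneg_left hX (by linarith)
  nlinarith

/-- Lazier-than-lazy greedy achieves a (1 − ε − δ) approximation in expectation. -/
theorem lazier_than_lazy_greedy {m nA nB : ℕ}
    (A : Fin nA → EuclideanSpace ℝ (Fin m)) (B : Fin nB → EuclideanSpace ℝ (Fin m))
    (hB : ∀ j, ‖B j‖ = 1) (k : ℕ) (hk : 1 ≤ k)
    (OPT : Finset (EuclideanSpace ℝ (Fin m)))
    (hOPTsub : OPT ⊆ Finset.image B Finset.univ) (hOPTcard : OPT.card = k)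
    (hOPTopt : ∀ C : Finset (EuclideanSpace ℝ (Fin m)),
      C ⊆ Finset.image B Finset.univ → C.card = k → fMat A C ≤ fMat A OPT)
    (hσ : 0 < sigmaMin OPT)
    (ε δ : ℝ) (hε : 0 < ε) (hδ0 : 0 < δ) (hδ1 : δ < 1) (hεδ : ε + δ ≤ 1)
    (pick : Finset (Fin nB) → Finset (Fin nB) → Fin nB)
    (hpick : ∀ T R : Finset (Fin nB), R.Nonempty →
      pick T R ∈ R ∧ ∀ j ∈ R,
        fMat A (insert (B j) (T.image B)) ≤ fMat A (insert (B (pick T R)) (T.image B)))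
    (r : ℕ) (hr : (16 * k : ℝ) / (ε * sigmaMin OPT) ≤ r) :
    (1 - ε - δ) * fMat A OPT ≤
      lazyExp A B pick ⌈(nB : ℝ) * Real.log (1 / δ) / k⌉₊ r ∅ := by
  classical
  have hf0 : 0 ≤ fMat A OPT := fMat_nonneg A OPT
  rcases eq_or_lt_of_le hf0 with hf | hf
  · rw [← hf, mul_zero]
    exact lazyExp_nonneg A B pick _ r ∅
  · obtain ⟨Oidx, hOimg, hOcard'⟩ := exists_Oidx B OPT hOPTsub
    have hOcard : Oidx.card = k := by rw [hOcard', hOPTcard]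
    have hkR : (0:ℝ) < k := by exact_mod_cast hk
    have hεδ0 : 0 < ε + δ := by linarith
    have hδ1' : (0:ℝ) ≤ 1 - δ := by linarith
    have hσ1 : sigmaMin OPT ≤ 1 := by
      have hOne : OPT.Nonempty := Finset.card_pos.1 (by rw [hOPTcard]; exact hk)
      obtain ⟨v0, hv0⟩ := hOne
      have hv0n : ‖v0‖ = 1 := by
        obtain ⟨j, -, rfl⟩ := Finset.mem_image.1 (hOPTsub hv0)
        exact hB j
      exact sigmaMin_le_one OPT hv0 hv0n
    set s : ℕ := ⌈(nB : ℝ) * Real.log (1 / δ) / k⌉₊ with hsdef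
    set c : ℝ := (1 - δ) * sigmaMin OPT / (4 * k * fMat A OPT) with hc
    have hden4 : (0:ℝ) < 4 * k * fMat A OPT := by
      have : (0:ℝ) < 4 * (k:ℝ) := by linarith
      exact mul_pos this hf
    have hcpos : 0 < c := div_pos (mul_pos (by linarith) hσ) hden4
    have hcf : c * fMat A OPT ≤ 1/4 := by
      have he : c * fMat A OPT = (1 - δ) * sigmaMin OPT / (4 * k) := by
        rw [hc]
        field_simp
      rw [he, div_le_div_iff₀ (by linarith) (by norm_num)]
      have h1 : (1 - δ) * sigmaMin OPT ≤ 1 * 1 :=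
        mul_le_mul (by linarith) hσ1 (le_of_lt hσ) (by norm_num)
      have hk1 : (1:ℝ) ≤ (k : ℝ) := by exact_mod_cast hk
      nlinarith [h1, hk1]
    have hs : (nB : ℝ) * Real.log (1 / δ) / k ≤ (s : ℝ) := Nat.le_ceil _
    have hstep := step_bound A B hB k hk OPT Oidx hOimg hOcard hOPTcard hσ hf δ hδ0 hδ1
      pick hpick s hs
    have hdes := descent A B pick s (fMat A OPT) c hcpos hcf hstep r (∅ : Finset (Fin nB))
    have hemp : fMat A ((∅ : Finset (Fin nB)).image B) = 0 := by
      rw [Finset.image_empty]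
      exact fMat_empty A
    rw [hemp, sub_zero] at hdes
    -- lower bound on X := c r f*
    have hεσ : (0:ℝ) < ε * sigmaMin OPT := mul_pos hε hσ
    have h16 : 16 * (k:ℝ) ≤ ε * sigmaMin OPT * r := by
      rw [div_le_iff₀ hεσ] at hr
      nlinarith [hr]
    have hX : 4 * (1 - δ) / ε ≤ c * r * fMat A OPT := by
      have hcrf : c * (r:ℝ) * fMat A OPT = (1 - δ) * (ε * sigmaMin OPT * r) / (4 * k * ε) := by
        rw [hc]
        field_simp
      rw [hcrf, div_le_div_iff₀ hε (by positivity)]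
      nlinarith [mul_le_mul_of_nonneg_left h16 hδ1']
    have hH : Hfun (c * r) (fMat A OPT) ≤ (ε + δ) * fMat A OPT := by
      unfold Hfun
      rw [if_neg (not_le.2 hf)]
      have hXnn : (0:ℝ) ≤ c * r * fMat A OPT :=
        mul_nonneg (mul_nonneg hcpos.le (Nat.cast_nonneg r)) hf0
      exact final_numeric ε δ (fMat A OPT) (c * r * fMat A OPT) hε hδ0 hδ1 hεδ hf hX hXnn
    linarith [hdes, hH]
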